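/- arXiv:1202.6353 — 5 statements merged into one kernel-verified Lean document; each statement's English description precedes it below -/
import Mathlib

section
/- Let R be a principal Artinian local ring of length n with maximal ideal 𝔪 generated by π, and let T be a free R-module. For every integer 0 ≤ i ≤ n, the map T → T given by x ↦ π^{n−i}·x induces an R-module isomorphism T/𝔪^iT ≅ T[𝔪^i], where T[𝔪^i] = {x ∈ T : 𝔪^i·x = 0}. -/
/-- The length of a module: the Krull dimension of its lattice of submodules. -/
noncomputable def moduleLength (R M : Type*) [Ring R] [AddCommGroup M] [Module R M] : ℕ∞ :=
  WithBot.unbotD 0 (Order.krullDim (Submodule R M))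

section Aux

open IsLocalRing Ideal

variable {R : Type*} [CommRing R] [IsLocalRing R]

/-- Decompose a nonzero element as a unit times a power of the uniformizer. -/
lemma exists_unit_mul_pow (π : R) (hπ : maximalIdeal R = span {π})
    {m : ℕ} (hm : π ^ m = 0) {c : R} (hc : c ≠ 0) :
    ∃ (j : ℕ) (d : R), IsUnit d ∧ c = d * π ^ j := by
  classical
  have hex : ∃ j, ¬ (π ^ j ∣ c) := ⟨m, by rw [hm]; simpa using hc⟩
  set j := Nat.find hex with hj
  have hj0 : 0 < j := by
    by_contra h
    push_neg at h
    have hj0' : j = 0 := by omega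
    have hsp := Nat.find_spec hex
    rw [← hj, hj0', pow_zero] at hsp
    exact hsp (one_dvd c)
  have hdvd : π ^ (j - 1) ∣ c := by
    by_contra h
    have hle : Nat.find hex ≤ j - 1 := Nat.find_le h
    omega
  obtain ⟨d, hd⟩ := hdvd
  have hdu : IsUnit d := by
    by_contra hdu
    have hdm : d ∈ maximalIdeal R := by
      rw [IsLocalRing.mem_maximalIdeal]; exact hdu
    rw [hπ, Ideal.mem_span_singleton] at hdm
    obtain ⟨e, he⟩ := hdm
    have : π ^ j ∣ c := by
      refine ⟨e, ?_⟩
      have hpj : π ^ j = π ^ (j - 1) * π := by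
        conv_lhs => rw [show j = (j - 1) + 1 by omega]
        rw [pow_succ]
      rw [hd, he, hpj]
      ring
    exact Nat.find_spec hex this
  exact ⟨j - 1, d, hdu, by rw [hd, mul_comm]⟩

/-- Every ideal in a principal Artinian local ring is a power of the maximal ideal. -/
lemma ideal_eq_span_pow (π : R) (hπ : maximalIdeal R = span {π})
    {m : ℕ} (hm : π ^ m = 0) (I : Ideal R) : ∃ k ≤ m, I = span {π ^ k} := by
  classical
  by_cases hI : I = ⊥
  · exact ⟨m, le_rfl, by rw [hI, hm, Set.singleton_zero, span_zero]⟩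
  · have hex : ∃ k, π ^ k ∈ I := by
      obtain ⟨a, haI, ha0⟩ := Submodule.exists_mem_ne_zero_of_ne_bot hI
      obtain ⟨j, d, hd, rfl⟩ := exists_unit_mul_pow π hπ hm ha0
      exact ⟨j, by
        have := I.smul_mem (↑hd.unit⁻¹ : R) haI
        rwa [smul_eq_mul, ← mul_assoc, IsUnit.val_inv_mul, one_mul] at this⟩
    set k := Nat.find hex with hk
    refine ⟨k, Nat.find_le (by rw [hm]; exact I.zero_mem), le_antisymm ?_ ?_⟩
    · intro x hx
      rcases eq_or_ne x 0 with rfl | hx0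
      · exact zero_mem _
      obtain ⟨j, d, hd, rfl⟩ := exists_unit_mul_pow π hπ hm hx0
      have hjI : π ^ j ∈ I := by
        have := I.smul_mem (↑hd.unit⁻¹ : R) hx
        rwa [smul_eq_mul, ← mul_assoc, IsUnit.val_inv_mul, one_mul] at this
      have hkj : k ≤ j := Nat.find_le hjI
      rw [Ideal.mem_span_singleton]
      exact Dvd.dvd.mul_left (pow_dvd_pow π hkj) d
    · rw [Ideal.span_le, Set.singleton_subset_iff]
      exact Nat.find_spec hex

/-- Strictness of the chain of powers. -/
lemma span_pow_succ_lt (π : R) (hπ : maximalIdeal R = span {π})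
    {k : ℕ} (hk : π ^ k ≠ 0) :
    (span {π ^ (k + 1)} : Ideal R) < span {π ^ k} := by
  refine lt_of_le_of_ne (span_singleton_le_span_singleton.2 (pow_dvd_pow π k.le_succ)) ?_
  intro h
  have : π ^ k ∈ (span {π ^ (k+1)} : Ideal R) := by
    rw [h]; exact mem_span_singleton_self _
  rw [Ideal.mem_span_singleton] at this
  obtain ⟨c, hc⟩ := this
  have hu : IsUnit (1 - π * c) := by
    apply IsLocalRing.isUnit_one_sub_self_of_mem_nonunits
    rw [← IsLocalRing.mem_maximalIdeal, hπ, Ideal.mem_span_singleton]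
    exact Dvd.intro c rfl
  have hzero : π ^ k * (1 - π * c) = 0 := by
    have : π ^ k = π ^ k * (π * c) := by nth_rewrite 1 [hc]; rw [pow_succ]; ring
    rw [mul_sub, mul_one, ← this, sub_self]
  apply hk
  have := congrArg (fun x => x * (↑hu.unit⁻¹ : R)) hzero
  simp only [zero_mul] at this
  rw [← this, mul_assoc]
  simp

/-- The annihilator condition: if `c * π^k = 0` with `k ≤ n`, then `π^(n-k) ∣ c`. -/
lemma pow_dvd_of_mul_pow_eq_zero (π : R) (hπ : maximalIdeal R = span {π})
    {n : ℕ} (hm : π ^ n = 0) (hlt : ∀ j < n, π ^ j ≠ 0)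
    {c : R} {k : ℕ} (hk : k ≤ n) (h : c * π ^ k = 0) : π ^ (n - k) ∣ c := by
  rcases eq_or_ne c 0 with rfl | hc0
  · exact dvd_zero _
  obtain ⟨j, d, hd, rfl⟩ := exists_unit_mul_pow π hπ hm hc0
  have hjk : π ^ (j + k) = 0 := by
    have h' : d * π ^ (j + k) = 0 := by rw [pow_add, ← mul_assoc]; exact h
    have := congrArg (fun x => (↑hd.unit⁻¹ : R) * x) h'
    simpa [← mul_assoc, IsUnit.val_inv_mul] using this
  have hnjk : n ≤ j + k := by
    by_contra hcon
    exact hlt _ (by omega) hjk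
  exact Dvd.dvd.mul_left (pow_dvd_pow π (by omega)) d

end Aux

section Core

open LinearMap

/-- Core lemma for free modules: kernel of scalar `a` equals range of scalar `b`
when `a*b = 0` and the annihilator of `a` is generated by `b`. -/
lemma ker_smul_eq_range_smul {R T : Type*} [CommRing R] [AddCommGroup T] [Module R T]
    [Module.Free R T] {a b : R} (hab : a * b = 0)
    (hann : ∀ c, c * a = 0 → b ∣ c) :
    LinearMap.ker (a • (LinearMap.id : T →ₗ[R] T)) =
      LinearMap.range (b • (LinearMap.id : T →ₗ[R] T)) := by
  ext x
  simp only [LinearMap.mem_ker, LinearMap.mem_range, LinearMap.smul_apply, LinearMap.id_apply]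
  constructor
  · intro hx
    obtain ⟨ι, B⟩ := Module.Free.exists_basis (R := R) (M := T)
    have hcoord : ∀ j, (B.repr x j) * a = 0 := by
      intro j
      have h1 : B.repr (a • x) j = a * B.repr x j := by simp
      rw [hx] at h1
      simp only [map_zero, Finsupp.coe_zero, Pi.zero_apply] at h1
      rw [mul_comm]; exact h1.symm
    have hdvd : ∀ j, ∃ c, B.repr x j = b * c := by
      intro j
      obtain ⟨c, hc⟩ := hann _ (hcoord j)
      exact ⟨c, hc⟩
    choose c hc using hdvd
    refine ⟨∑ j ∈ (B.repr x).support, c j • B j, ?_⟩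
    have : b • ∑ j ∈ (B.repr x).support, c j • B j
        = ∑ j ∈ (B.repr x).support, (B.repr x j) • B j := by
      rw [Finset.smul_sum]
      refine Finset.sum_congr rfl fun j _ => ?_
      rw [smul_smul, ← hc j]
    rw [this]
    conv_rhs => rw [← B.linearCombination_repr x]
    rw [Finsupp.linearCombination_apply, Finsupp.sum]
  · rintro ⟨y, rfl⟩
    rw [smul_smul, hab, zero_smul]

end Core

/-- Over a principal Artinian local ring `R` of length `n` with maximal ideal `𝔪 = (π)`,
for a free `R`-module `T` and `0 ≤ i ≤ n`, multiplication by `π^(n-i)` on `T` has kernel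
`𝔪^i T` and image `T[𝔪^i]`; hence it induces an isomorphism `T/𝔪^i T ≅ T[𝔪^i]`. -/
theorem quotient_iso_torsion_of_principal_artinian_local
    {R : Type*} [CommRing R] [IsLocalRing R] [IsArtinianRing R]
    (π : R) (hπ : IsLocalRing.maximalIdeal R = Ideal.span {π})
    (n : ℕ) (hlen : moduleLength R R = (n : ℕ∞))
    (T : Type*) [AddCommGroup T] [Module R T] [Module.Free R T]
    (i : ℕ) (hi : i ≤ n) :
    LinearMap.ker (π ^ (n - i) • (LinearMap.id : T →ₗ[R] T)) =
      (IsLocalRing.maximalIdeal R) ^ i • (⊤ : Submodule R T) ∧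
    LinearMap.range (π ^ (n - i) • (LinearMap.id : T →ₗ[R] T)) =
      Submodule.torsionBySet R T (((IsLocalRing.maximalIdeal R) ^ i : Ideal R) : Set R) := by
  -- nilpotency of π
  have hnilm : IsNilpotent (IsLocalRing.maximalIdeal R) := by
    rw [← IsLocalRing.jacobson_eq_maximalIdeal (⊥ : Ideal R) bot_ne_top]
    exact IsArtinianRing.isNilpotent_jacobson_bot
  classical
  have hnil : ∃ m, π ^ m = 0 := by
    obtain ⟨m, hm⟩ := hnilm
    refine ⟨m, Ideal.span_singleton_eq_bot.mp ?_⟩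
    rw [← Ideal.span_singleton_pow, ← hπ]
    simpa using hm
  set m := Nat.find hnil with hmdef
  have hm0 : π ^ m = 0 := Nat.find_spec hnil
  have hltm : ∀ j < m, π ^ j ≠ 0 := fun j hj => Nat.find_min hnil hj
  -- chain strictness
  have hchain : ∀ a b : ℕ, b < a → a ≤ m →
      (Ideal.span {π ^ a} : Ideal R) < Ideal.span {π ^ b} := by
    intro a b hba ham
    calc (Ideal.span {π ^ a} : Ideal R)
        ≤ Ideal.span {π ^ (b + 1)} :=
          Ideal.span_singleton_le_span_singleton.2 (pow_dvd_pow π (by omega))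
      _ < Ideal.span {π ^ b} := span_pow_succ_lt π hπ (hltm b (by omega))
  -- Krull dimension equals m
  have hdim : Order.krullDim (Submodule R R) = (m : ℕ∞) := by
    apply le_antisymm
    · rw [Order.krullDim_eq_iSup_length]
      rw [WithBot.coe_le_coe]
      apply iSup_le
      intro p
      have hlenp : p.length ≤ m := by
        choose k hk1 hk2 using fun j => ideal_eq_span_pow π hπ hm0 (p.toFun j)
        have anti : ∀ j j' : Fin (p.length + 1), j < j' → k j' < k j := by
          intro j j' hjj'
          by_contra h'
          push_neg at h'
          have hle : p.toFun j' ≤ p.toFun j := by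
            rw [hk2, hk2]
            exact Ideal.span_singleton_le_span_singleton.2 (pow_dvd_pow π h')
          exact (show p.toFun j < p.toFun j' from p.strictMono hjj').not_ge hle
        have inj : Function.Injective
            (fun j : Fin (p.length + 1) => (⟨m - k j, by omega⟩ : Fin (m + 1))) := by
          intro j j' h
          simp only [Fin.mk.injEq] at h
          have h1 := hk1 j
          have h2 := hk1 j'
          rcases lt_trichotomy j j' with hlt | heq | hgt
          · have := anti _ _ hlt; omega
          · exact heq
          · have := anti _ _ hgt; omega
        have := Fintype.card_le_of_injective _ inj
        simpa using this
      exact_mod_cast hlenp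
    · rcases Nat.eq_zero_or_pos m with hm' | hm'
      · rw [hm']
        exact_mod_cast Order.krullDim_nonneg
      · let p : LTSeries (Submodule R R) :=
          ⟨m, fun j => Ideal.span {π ^ (m - (j : ℕ))}, by
            intro j
            apply hchain
            · simp [Fin.lt_iff_val_lt_val]
              omega
            · omega⟩
        have := Order.LTSeries.length_le_krullDim p
        simpa using this
  -- m = n
  have hmn : m = n := by
    have : moduleLength R R = (m : ℕ∞) := by
      rw [moduleLength, hdim]; rfl
    rw [hlen] at this
    exact_mod_cast this.symm
  subst hmn
  -- key facts
  have hab : π ^ (m - i) * π ^ i = 0 := by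
    rw [← pow_add]
    have : m - i + i = m := by omega
    rw [this, hm0]
  have hba : π ^ i * π ^ (m - i) = 0 := by rw [mul_comm]; exact hab
  have hann1 : ∀ c, c * π ^ (m - i) = 0 → π ^ i ∣ c := by
    intro c hc
    have := pow_dvd_of_mul_pow_eq_zero π hπ hm0 hltm (k := m - i) (by omega) hc
    have hmi : m - (m - i) = i := by omega
    rwa [hmi] at this
  have hann2 : ∀ c, c * π ^ i = 0 → π ^ (m - i) ∣ c :=
    fun c hc => pow_dvd_of_mul_pow_eq_zero π hπ hm0 hltm hi hc
  have hpow : (IsLocalRing.maximalIdeal R) ^ i = Ideal.span {π ^ i} := by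
    rw [hπ, Ideal.span_singleton_pow]
  constructor
  · rw [ker_smul_eq_range_smul hab hann1, hpow]
    apply le_antisymm
    · rintro x ⟨y, rfl⟩
      exact Submodule.smul_mem_smul (Ideal.mem_span_singleton_self _) trivial
    · rw [Submodule.smul_le]
      rintro r hr y -
      rw [Ideal.mem_span_singleton] at hr
      obtain ⟨d, rfl⟩ := hr
      exact ⟨d • y, by simp [smul_smul, mul_comm]⟩
  · rw [← ker_smul_eq_range_smul hba hann2]
    rw [hpow]
    have : ((Ideal.span {π ^ i} : Ideal R) : Set R) = ((Submodule.span R {π ^ i} : Submodule R R) : Set R) := rfl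
    rw [this, Submodule.torsionBySet_span_singleton_eq]
    ext x
    simp only [LinearMap.mem_ker, LinearMap.smul_apply, LinearMap.id_apply,
      Submodule.mem_torsionBy_iff]
end

section
/- Let R be a principal Artinian local ring with maximal ideal 𝔪, let C be a nonzero finite-length cyclic R-module, and let i be the largest integer with 𝔪^i·C ≠ 0. If f : C → B is an R-linear map to an R-module B such that f(𝔪^i·C) ≠ 0, then f is injective. Moreover, if C and B are both free R-modules of rank one, then every injective R-linear map f : C → B is an isomorphism. -/
universe v

/-- Over a principal Artinian local ring `R`: (1) if `C` is a nonzero finite-length cyclic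
module and `i` is the largest integer with `𝔪^i C ≠ 0`, then any linear map `f : C → B`
with `f(𝔪^i C) ≠ 0` is injective; (2) any injective linear map between free rank-one
`R`-modules is an isomorphism. -/
theorem injective_of_nonzero_on_minimal_and_bijective_of_injective
    {R : Type*} [CommRing R] [IsLocalRing R] [IsArtinianRing R]
    (hprin : (IsLocalRing.maximalIdeal R).IsPrincipal) :
    (∀ (C B : Type v) (_ : AddCommGroup C) (_ : Module R C)
        (_ : AddCommGroup B) (_ : Module R B),
      (∃ c : C, Submodule.span R {c} = ⊤) → Nontrivial C → IsFiniteLength R C →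
      ∀ i : ℕ,
        (IsLocalRing.maximalIdeal R) ^ i • (⊤ : Submodule R C) ≠ ⊥ →
        (IsLocalRing.maximalIdeal R) ^ (i + 1) • (⊤ : Submodule R C) = ⊥ →
      ∀ f : C →ₗ[R] B,
        Submodule.map f ((IsLocalRing.maximalIdeal R) ^ i • (⊤ : Submodule R C)) ≠ ⊥ →
        Function.Injective f) ∧
    (∀ (C B : Type v) (_ : AddCommGroup C) (_ : Module R C)
        (_ : AddCommGroup B) (_ : Module R B),
      (Nonempty (Module.Basis (Fin 1) R C)) → (Nonempty (Module.Basis (Fin 1) R B)) →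
      ∀ f : C →ₗ[R] B, Function.Injective f → Function.Bijective f) := by
  -- maximal ideal is nilpotent
  have hnil : IsNilpotent (IsLocalRing.maximalIdeal R) := by
    rw [← IsLocalRing.jacobson_eq_maximalIdeal ⊥ bot_ne_top]
    exact IsArtinianRing.isNilpotent_jacobson_bot
  obtain ⟨n, hn⟩ := hnil
  obtain ⟨t, ht⟩ := hprin
  -- every nonzero element of R is a unit times t^k
  have key : ∀ r : R, r ≠ 0 → ∃ (u : R) (k : ℕ), IsUnit u ∧ r = u * t ^ k := by
    intro r hr
    have hex : ∃ m, r ∉ (IsLocalRing.maximalIdeal R) ^ m := by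
      refine ⟨n, ?_⟩
      rw [hn]
      simpa using hr
    classical
    set m := Nat.find hex with hm
    have hm0 : m ≠ 0 := by
      intro h0
      have := Nat.find_spec hex
      rw [← hm, h0] at this
      simp at this
    obtain ⟨k, hk⟩ := Nat.exists_eq_succ_of_ne_zero hm0
    have hmem : r ∈ (IsLocalRing.maximalIdeal R) ^ k :=
      not_not.mp (Nat.find_min hex (by omega))
    have hnot : r ∉ (IsLocalRing.maximalIdeal R) ^ (k + 1) := by
      have := Nat.find_spec hex
      rwa [← hm, hk] at this
    rw [ht, Ideal.submodule_span_eq, Ideal.span_singleton_pow,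
      Ideal.mem_span_singleton] at hmem
    obtain ⟨u, hu⟩ := hmem
    refine ⟨u, k, ?_, by rw [hu, mul_comm]⟩
    rw [← IsLocalRing.notMem_maximalIdeal]
    intro humem
    apply hnot
    rw [ht, Ideal.submodule_span_eq, Ideal.span_singleton_pow,
      Ideal.mem_span_singleton, hu]
    rw [ht, Ideal.submodule_span_eq, Ideal.mem_span_singleton'] at humem
    obtain ⟨v, hv⟩ := humem
    exact ⟨v, by rw [← hv]; ring⟩
  have hspan : ∀ j : ℕ, (IsLocalRing.maximalIdeal R) ^ j = Ideal.span {t ^ j} := by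
    intro j
    rw [ht, Ideal.submodule_span_eq, Ideal.span_singleton_pow]
  constructor
  · intro C B _ _ _ _ hcyc _ _ i hne hzero f hmap
    obtain ⟨c, hc⟩ := hcyc
    rw [← LinearMap.ker_eq_bot]
    by_contra hker
    obtain ⟨x, hxker, hx0⟩ := (Submodule.ne_bot_iff _).mp hker
    have hx : x ∈ Submodule.span R {c} := hc ▸ Submodule.mem_top
    obtain ⟨r, hr⟩ := Submodule.mem_span_singleton.mp hx
    have hr0 : r ≠ 0 := by
      rintro rfl
      rw [zero_smul] at hr
      exact hx0 hr.symm
    obtain ⟨u, k, hu, rfl⟩ := key r hr0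
    obtain ⟨U, rfl⟩ := hu
    -- t^(i+1) • c = 0
    have htop : ∀ j : ℕ, (t ^ j) • c ∈ (IsLocalRing.maximalIdeal R) ^ j • (⊤ : Submodule R C) := by
      intro j
      exact Submodule.smul_mem_smul (by rw [hspan j]; exact Ideal.subset_span rfl) Submodule.mem_top
    have hzc : (t ^ (i + 1)) • c = 0 := by
      have := htop (i + 1)
      rw [hzero] at this
      exact this
    -- k ≤ i
    have hki : k ≤ i := by
      by_contra hk
      push_neg at hk
      apply hx0
      rw [← hr]
      have : t ^ k = t ^ (k - (i + 1)) * t ^ (i + 1) := by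
        rw [← pow_add]
        congr 1
        omega
      rw [this, ← mul_assoc, mul_smul, hzc, smul_zero]
    -- f (t ^ i • c) = 0
    have hfx : f x = 0 := hxker
    have hfi : f ((t ^ i) • c) = 0 := by
      have hti : (t ^ i) • c = (t ^ (i - k) * ((U⁻¹ : Rˣ) : R)) • x := by
        rw [← hr, smul_smul]
        rw [show (t ^ (i - k) * ((U⁻¹ : Rˣ) : R)) * ((U : R) * t ^ k)
            = ((U⁻¹ : Rˣ) : R) * (U : R) * (t ^ (i - k) * t ^ k) by ring,
          Units.inv_mul, one_mul, ← pow_add]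
        congr 2
        omega
      rw [hti, map_smul, hfx, smul_zero]
    -- contradiction with hmap
    apply hmap
    rw [Submodule.eq_bot_iff]
    rintro y ⟨z, hz, rfl⟩
    rw [hspan i, ← hc] at hz
    rw [SetLike.mem_coe] at hz
    obtain ⟨s, hs, hsz⟩ := Submodule.mem_smul_span_singleton.mp hz
    obtain ⟨a, ha⟩ := Ideal.mem_span_singleton'.mp hs
    rw [← hsz, ← ha, mul_smul, map_smul, hfi, smul_zero]
  · intro C B _ _ _ _ hbc hbb f hf
    obtain ⟨bc⟩ := hbc
    obtain ⟨bb⟩ := hbb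
    have hspanB : Submodule.span R {bb 0} = ⊤ := by
      have := bb.span_eq
      rwa [show Set.range bb = {bb 0} by
        ext y; simp [Set.range_unique, Fin.eq_zero]] at this
    obtain ⟨r, hr⟩ := Submodule.mem_span_singleton.mp
      (hspanB ▸ Submodule.mem_top (x := f (bc 0)))
    -- r is a unit
    have hrep : ∀ s : R, s • bc 0 = 0 → s = 0 := by
      intro s hs
      have := congrArg (fun y => bc.repr y 0) hs
      simpa using this
    have hru : IsUnit r := by
      by_contra hnu
      have hrm : r ∈ IsLocalRing.maximalIdeal R := by
        rwa [IsLocalRing.mem_maximalIdeal, mem_nonunits_iff]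
      have hex2 : ∃ m, r ^ m = 0 := by
        refine ⟨n, ?_⟩
        have : r ^ n ∈ (IsLocalRing.maximalIdeal R) ^ n := Ideal.pow_mem_pow hrm n
        rw [hn] at this
        exact this
      classical
      set m := Nat.find hex2 with hm
      have hm0 : m ≠ 0 := by
        intro h0
        have := Nat.find_spec hex2
        rw [← hm, h0, pow_zero] at this
        exact one_ne_zero this
      obtain ⟨l, hl⟩ := Nat.exists_eq_succ_of_ne_zero hm0
      have hlne : r ^ l ≠ 0 := Nat.find_min hex2 (by omega)
      have : f ((r ^ l) • bc 0) = f 0 := by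
        rw [map_smul, ← hr, smul_smul, ← pow_succ, ← Nat.succ_eq_add_one, ← hl, hm,
          Nat.find_spec hex2, zero_smul, map_zero]
      exact hlne (hrep _ (hf this))
    obtain ⟨U, rfl⟩ := hru
    refine ⟨hf, fun y => ?_⟩
    obtain ⟨s, hs⟩ := Submodule.mem_span_singleton.mp (hspanB ▸ Submodule.mem_top (x := y))
    refine ⟨(s * ((U⁻¹ : Rˣ) : R)) • bc 0, ?_⟩
    rw [map_smul, ← hr, ← hs, smul_smul]
    congr 1
    rw [mul_assoc, Units.inv_mul, mul_one]
end

section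
/- Given bipartite Euler system data over R satisfying hypotheses (DU) and (LS), every bipartite Euler system of even type is trivial: if (κ_n)_{n ∈ N^even}, (λ_n)_{n ∈ N^odd} is a bipartite Euler system of even type, then λ_n = 0 for every n ∈ N^odd. -/
private lemma unbot'_zero_mono {a b : WithBot ℕ∞} (h : a ≤ b) : WithBot.unbotD 0 a ≤ WithBot.unbotD 0 b := by
  cases a with
  | bot => simp
  | coe x =>
    cases b with
    | bot => exact absurd h (by simp)
    | coe y => simpa using h

private lemma moduleLength_le_of_injective {R M N : Type*} [Ring R] [AddCommGroup M] [Module R M]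
    [AddCommGroup N] [Module R N] (f : M →ₗ[R] N) (hf : Function.Injective f) :
    moduleLength R M ≤ moduleLength R N := by
  refine unbot'_zero_mono (Order.krullDim_le_of_strictMono (Submodule.map f) ?_)
  exact Monotone.strictMono_of_injective (fun _ _ h => Submodule.map_mono h)
      (Submodule.map_injective_of_injective hf)

private lemma one_le_moduleLength {R N : Type*} [Ring R] [AddCommGroup N] [Module R N]
    [Nontrivial N] : 1 ≤ moduleLength R N := by
  have hlt : (⊥ : Submodule R N) < ⊤ := by
    refine lt_of_le_of_ne bot_le ?_
    intro hbot
    obtain ⟨z, hz⟩ := exists_ne (0 : N)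
    exact hz (by simpa using (hbot ▸ Submodule.mem_top : z ∈ (⊥ : Submodule R N)))
  have : ((1 : ℕ) : WithBot ℕ∞) ≤ Order.krullDim (Submodule R N) := by
    exact (Order.LTSeries.length_le_krullDim (RelSeries.fromListIsChain [⊥, ⊤] (by simp)
      (by simpa using hlt)))
  -- convert
  unfold moduleLength
  cases hKD : Order.krullDim (Submodule R N) with
  | bot => rw [hKD] at this; exact absurd this (by simp)
  | coe x => rw [hKD] at this; simpa using this

/-- Given bipartite Euler system data over `R` satisfying (DU) and (LS), every
bipartite Euler system of even type is trivial: `λ_n = 0` for all `n ∈ N^odd`. -/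
theorem no_nontrivial_even_euler_systems
    {R : Type*} [CommRing R] [IsLocalRing R] [IsArtinianRing R]
    (hprin : (IsLocalRing.maximalIdeal R).IsPrincipal)
    (k : ℕ) (hk : moduleLength R R = (k : ℕ∞))
    {L : Type*} [Infinite L] [DecidableEq L]
    (even : Finset L → Prop)
    (hflip : ∀ (n : Finset L) (ℓ : L), ℓ ∉ n → (even (insert ℓ n) ↔ ¬ even n))
    (Sel : Finset L → Type*) [∀ n, AddCommGroup (Sel n)] [∀ n, Module R (Sel n)]
    (M : Finset L → Type*) [∀ n, AddCommGroup (M n)] [∀ n, Module R (M n)]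
    (m : Finset L → ℕ) (hm : ∀ n, moduleLength R (M n) = (m n : ℕ∞))
    (isoEven : ∀ n, even n → Nonempty (Sel n ≃ₗ[R] M n × M n))
    (isoOdd : ∀ n, ¬ even n → Nonempty (Sel n ≃ₗ[R] R × M n × M n))
    (Hunr Hord : L → Type*)
    [∀ ℓ, AddCommGroup (Hunr ℓ)] [∀ ℓ, Module R (Hunr ℓ)]
    [∀ ℓ, AddCommGroup (Hord ℓ)] [∀ ℓ, Module R (Hord ℓ)]
    (bUnr : ∀ ℓ, Nonempty (Module.Basis (Fin 1) R (Hunr ℓ)))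
    (bOrd : ∀ ℓ, Nonempty (Module.Basis (Fin 1) R (Hord ℓ)))
    (locUnr : ∀ (n : Finset L) (ℓ : L), ℓ ∉ n → (Sel n →ₗ[R] Hunr ℓ))
    (locOrd : ∀ (n : Finset L) (ℓ : L), ℓ ∉ n → (Sel (insert ℓ n) →ₗ[R] Hord ℓ))
    -- (DU)
    (hDU : ∀ (n : Finset L) (ℓ : L) (h : ℓ ∉ n),
      moduleLength R (LinearMap.range (locUnr n ℓ h)) +
        moduleLength R (LinearMap.range (locOrd n ℓ h)) = (k : ℕ∞))
    -- (LS)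
    (hLS : ∀ (n : Finset L) (C : Submodule R (Sel n)), C ≠ ⊥ →
      (∃ x : Sel n, C = Submodule.span R {x}) →
      ∃ (ℓ : L) (h : ℓ ∉ n), ∀ x ∈ C, locUnr n ℓ h x = 0 → x = 0)
    -- a bipartite Euler system of even type
    (κ : ∀ n : Finset L, even n → Sel n)
    (lam : ∀ n : Finset L, ¬ even n → R)
    (hrec1 : ∀ (n : Finset L) (hn : ¬ even n) (ℓ : L) (h : ℓ ∉ n)
        (he : even (insert ℓ n)),
      Nonempty ((R ⧸ Ideal.span {lam n hn}) ≃ₗ[R]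
        (Hord ℓ ⧸ Submodule.span R {locOrd n ℓ h (κ (insert ℓ n) he)})))
    (hrec2 : ∀ (n : Finset L) (hn : even n) (ℓ : L) (h : ℓ ∉ n)
        (ho : ¬ even (insert ℓ n)),
      Nonempty ((R ⧸ Ideal.span {lam (insert ℓ n) ho}) ≃ₗ[R]
        (Hunr ℓ ⧸ Submodule.span R {locUnr n ℓ h (κ n hn)}))) :
    ∀ (n : Finset L) (hn : ¬ even n), lam n hn = 0 := by
  intro n hn
  obtain ⟨ψ⟩ := isoOdd n hn
  set x : Sel n := ψ.symm (1, 0, 0) with hxdef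
  have hψx : ψ x = (1, 0, 0) := ψ.apply_symm_apply _
  have hx : x ≠ 0 := by
    intro h0
    have : ((1 : R), (0 : M n), (0 : M n)) = 0 := by
      rw [← hψx, h0, map_zero]
    exact one_ne_zero (congrArg Prod.fst this)
  have hCne : Submodule.span R {x} ≠ ⊥ := by
    simpa [Submodule.span_singleton_eq_bot] using hx
  obtain ⟨ℓ, h, hinj⟩ := hLS n (Submodule.span R {x}) hCne ⟨x, rfl⟩
  set y : Hunr ℓ := locUnr n ℓ h x with hydef
  -- y has trivial annihilator
  have hann : ∀ r : R, r • y = 0 → r = 0 := by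
    intro r hr
    have hrx : r • x = 0 := by
      refine hinj _ (Submodule.smul_mem _ r (Submodule.mem_span_singleton_self x)) ?_
      rw [map_smul]; exact hr
    have : ((r : R), (0 : M n), (0 : M n)) = 0 := by
      have := congrArg ψ hrx
      rw [map_smul, hψx, map_zero] at this
      simpa [Prod.smul_def] using this
    exact congrArg Prod.fst this
  -- injective map R → range (locUnr n ℓ h)
  have hkle : (k : ℕ∞) ≤ moduleLength R (LinearMap.range (locUnr n ℓ h)) := by
    have hymem : y ∈ LinearMap.range (locUnr n ℓ h) := ⟨x, rfl⟩
    let f : R →ₗ[R] LinearMap.range (locUnr n ℓ h) :=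
      LinearMap.toSpanSingleton R _ (⟨y, hymem⟩ : LinearMap.range (locUnr n ℓ h))
    have hfinj : Function.Injective f := by
      intro a b hab
      have : (a - b) • (⟨y, hymem⟩ : LinearMap.range (locUnr n ℓ h)) = 0 := by
        rw [sub_smul]
        simpa [f, LinearMap.toSpanSingleton, LinearMap.smulRight] using sub_eq_zero.mpr hab
      have : (a - b) • y = 0 := congrArg Subtype.val this
      exact sub_eq_zero.mp (hann _ this)
    calc (k : ℕ∞) = moduleLength R R := hk.symm
      _ ≤ _ := moduleLength_le_of_injective f hfinj
  -- (DU) forces the ord range to have length 0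
  have hb0 : moduleLength R (LinearMap.range (locOrd n ℓ h)) = 0 := by
    have hDUn := hDU n ℓ h
    have ha_le : moduleLength R (LinearMap.range (locUnr n ℓ h)) ≤ (k : ℕ∞) :=
      hDUn ▸ le_self_add
    have ha : moduleLength R (LinearMap.range (locUnr n ℓ h)) = (k : ℕ∞) :=
      le_antisymm ha_le hkle
    rw [ha] at hDUn
    exact WithTop.add_left_cancel (by simp : (k : ℕ∞) ≠ ⊤)
      (hDUn.trans (add_zero (k : ℕ∞)).symm)
  -- hence the ord range is trivial
  have hz0 : ∀ w : Hord ℓ, w ∈ LinearMap.range (locOrd n ℓ h) → w = 0 := by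
    intro w hw
    by_contra hwne
    have : Nontrivial (LinearMap.range (locOrd n ℓ h)) :=
      ⟨⟨⟨w, hw⟩, 0, fun hc => hwne (congrArg Subtype.val hc)⟩⟩
    have h1 := one_le_moduleLength (R := R) (N := LinearMap.range (locOrd n ℓ h))
    rw [hb0] at h1
    exact absurd h1 (by simp)
  have he : even (insert ℓ n) := (hflip n ℓ h).mpr hn
  obtain ⟨e⟩ := hrec1 n hn ℓ h he
  set z : Hord ℓ := locOrd n ℓ h (κ (insert ℓ n) he) with hzdef
  have hz : z = 0 := hz0 z ⟨_, rfl⟩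
  -- lam annihilates R ⧸ (lam), hence annihilates Hord ℓ ⧸ span {z} = Hord ℓ ⧸ ⊥
  have hannQ : ∀ q : R ⧸ Ideal.span {lam n hn}, lam n hn • q = 0 := by
    intro q
    obtain ⟨r, rfl⟩ := Submodule.Quotient.mk_surjective _ q
    rw [← Submodule.Quotient.mk_smul]
    rw [Submodule.Quotient.mk_eq_zero]
    exact Ideal.mem_span_singleton.mpr ⟨r, by simp [smul_eq_mul]⟩
  have hannH : ∀ w : Hord ℓ ⧸ Submodule.span R {z}, lam n hn • w = 0 := by
    intro w
    have := congrArg e (hannQ (e.symm w))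
    rw [map_smul, e.apply_symm_apply, map_zero] at this
    exact this
  -- pull back through the quotient by the zero submodule
  have hannHord : ∀ v : Hord ℓ, lam n hn • v = 0 := by
    intro v
    have hspan : Submodule.span R {z} = ⊥ := by rw [hz, Submodule.span_zero_singleton]
    have hker : (Submodule.span R {z}).mkQ (lam n hn • v) = 0 := by
      rw [map_smul]; exact hannH _
    have : lam n hn • v ∈ Submodule.span R {z} := by
      rwa [Submodule.mkQ_apply, Submodule.Quotient.mk_eq_zero] at hker
    rw [hspan] at this
    simpa using this
  -- evaluate on a basis vector of Hord ℓ
  obtain ⟨b⟩ := bOrd ℓ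
  have hb := hannHord (b 0)
  have := congrArg (fun v => b.repr v 0) hb
  simpa [Module.Basis.repr_self, Finsupp.smul_apply, smul_eq_mul] using this
end

section
/- Given bipartite Euler system data over R satisfying hypotheses (DU), (LS) and (KER), let (κ_n)_{n ∈ N^odd}, (λ_n)_{n ∈ N^even} be a bipartite Euler system of odd type. If λ_n ≠ 0 for some n ∈ N^even, then 𝔪^{k−1}·M_n = 0. If κ_n ≠ 0 for some n ∈ N^odd, then 𝔪^{k−1}·M_n = 0. -/
section Aux

variable {R : Type*} [CommRing R]

private lemma unbot'_mono {a b : WithBot ℕ∞} (ha : 0 ≤ a) (h : a ≤ b) :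
    WithBot.unbotD 0 a ≤ WithBot.unbotD 0 b := by
  induction a using WithBot.recBotCoe with
  | bot => exact absurd (le_bot_iff.mp ha) (by simp)
  | coe a' =>
    induction b using WithBot.recBotCoe with
    | bot => exact absurd (le_bot_iff.mp h) (by simp)
    | coe b' => simpa using h

private lemma krullDim_eq_cast {α : Type*} [Preorder α] [Nonempty α] {c : ℕ∞}
    (h : WithBot.unbotD 0 (Order.krullDim α) = c) : Order.krullDim α = (c : WithBot ℕ∞) := by
  have h0 := Order.krullDim_nonneg (α := α)
  have hne : Order.krullDim α ≠ ⊥ := by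
    intro hb
    rw [hb] at h0
    exact absurd (le_bot_iff.mp h0) (by simp)
  obtain ⟨d, hd⟩ := WithBot.ne_bot_iff_exists.mp hne
  rw [← hd] at h ⊢
  rw [WithBot.unbotD_coe] at h
  exact_mod_cast h

private lemma mlen_eq_of_equiv {M N : Type*} [AddCommGroup M] [Module R M]
    [AddCommGroup N] [Module R N] (e : M ≃ₗ[R] N) :
    moduleLength R M = moduleLength R N := by
  unfold moduleLength
  rw [Order.krullDim_eq_of_orderIso (Submodule.orderIsoMapComap e)]

private lemma mlen_submodule_le {M : Type*} [AddCommGroup M] [Module R M]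
    (p : Submodule R M) : moduleLength R p ≤ moduleLength R M := by
  unfold moduleLength
  refine unbot'_mono Order.krullDim_nonneg ?_
  exact Order.krullDim_le_of_strictMono (Submodule.map p.subtype)
    (Submodule.map_strictMono_of_injective p.injective_subtype)

/-- a module containing an element with trivial annihilator has length at least that of `R`. -/
private lemma mlen_ge_of_free_elt {V : Type*} [AddCommGroup V] [Module R V]
    (v : V) (hv : ∀ a : R, a • v = 0 → a = 0) :
    moduleLength R R ≤ moduleLength R V := by
  have hinj : Function.Injective (LinearMap.toSpanSingleton R V v) := by
    intro a b hab
    have h1 : a • v = b • v := by simpa [LinearMap.toSpanSingleton_apply] using hab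
    have h2 : (a - b) • v = 0 := by rw [sub_smul, h1, sub_self]
    exact sub_eq_zero.mp (hv _ h2)
  calc moduleLength R R
      = moduleLength R (LinearMap.range (LinearMap.toSpanSingleton R V v)) :=
        mlen_eq_of_equiv (LinearEquiv.ofInjective _ hinj)
    _ ≤ moduleLength R V := mlen_submodule_le _

private lemma eq_zero_of_mlen_zero {V : Type*} [AddCommGroup V] [Module R V]
    (h : moduleLength R V = 0) (v : V) : v = 0 := by
  by_contra hv
  have hspan : (⊥ : Submodule R V) < Submodule.span R {v} :=
    bot_lt_iff_ne_bot.mpr (fun hb => hv (Submodule.span_singleton_eq_bot.mp hb))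
  let p : LTSeries (Submodule R V) := ⟨1, ![⊥, Submodule.span R {v}], by
    intro i
    fin_cases i
    simpa using hspan⟩
  have hle := Order.LTSeries.length_le_krullDim p
  rw [krullDim_eq_cast h] at hle
  have hpl : p.length = 1 := rfl
  rw [hpl] at hle
  exact absurd hle (by exact_mod_cast (by norm_num : ¬ ((1:ℕ∞) ≤ 0)))

/-- an ideal `N` with `R ≃ R ⧸ N` is trivial. -/
private lemma ideal_eq_bot_of_equiv (N : Submodule R R) (e : R ≃ₗ[R] (R ⧸ N)) : N = ⊥ := by
  set f : R →ₗ[R] R := e.symm.toLinearMap.comp N.mkQ with hf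
  have hsurj : Function.Surjective f := e.symm.surjective.comp (Submodule.mkQ_surjective N)
  have hf1 : ∀ a : R, f a = a * f 1 := fun a => by
    rw [← smul_eq_mul, ← map_smul, smul_eq_mul, mul_one]
  obtain ⟨d, hd⟩ := hsurj 1
  have hdf : d * f 1 = 1 := by rw [← hf1 d, hd]
  have hinj : Function.Injective f := by
    intro a b hab
    rw [hf1 a, hf1 b] at hab
    calc a = a * (d * f 1) := by rw [hdf, mul_one]
      _ = d * (a * f 1) := by ring
      _ = d * (b * f 1) := by rw [hab]
      _ = b * (d * f 1) := by ring
      _ = b := by rw [hdf, mul_one]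
  refine eq_bot_iff.mpr fun x hx => ?_
  have hmk : N.mkQ x = 0 := (Submodule.Quotient.mk_eq_zero N).mpr hx
  have hfx : f x = f 0 := by
    rw [map_zero, hf, LinearMap.comp_apply, hmk, map_zero]
  simpa using hinj hfx

private lemma elt_zero_of_equiv_quot {W : Type*} [AddCommGroup W] [Module R W]
    (eH : W ≃ₗ[R] R) (w : W) (e : R ≃ₗ[R] (W ⧸ Submodule.span R {w})) : w = 0 := by
  have hmap : (Submodule.span R {w}).map (eH : W →ₗ[R] R) = Submodule.span R {eH w} := by
    rw [Submodule.map_span]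
    simp
  have e2 : R ≃ₗ[R] (R ⧸ Submodule.span R {eH w}) :=
    e ≪≫ₗ Submodule.Quotient.equiv _ _ eH hmap
  have hbot := ideal_eq_bot_of_equiv _ e2
  have h0 : eH w = 0 := Submodule.span_singleton_eq_bot.mp hbot
  apply eH.injective
  rw [map_zero]
  exact h0

end Aux
section Ring

variable {R : Type*} [CommRing R] [IsLocalRing R] [IsArtinianRing R]

private lemma max_pow_eq_bot (k : ℕ) (hk : moduleLength R R = (k : ℕ∞))
    {π : R} (hπ : IsLocalRing.maximalIdeal R = Ideal.span {π}) :
    (IsLocalRing.maximalIdeal R) ^ k = ⊥ := by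
  by_contra hcontra
  have hstrict : ∀ j ≤ k, (IsLocalRing.maximalIdeal R) ^ (j + 1) <
      (IsLocalRing.maximalIdeal R) ^ j := by
    intro j hj
    refine lt_of_le_of_ne (Ideal.pow_le_pow_right (by omega)) ?_
    intro heq
    have hle : (IsLocalRing.maximalIdeal R) ^ j ≤
        (IsLocalRing.maximalIdeal R) • (IsLocalRing.maximalIdeal R) ^ j := by
      rw [smul_eq_mul, ← pow_succ']
      exact heq.ge
    have hfg : ((IsLocalRing.maximalIdeal R) ^ j).FG := by
      rw [hπ, Ideal.span_singleton_pow]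
      exact Submodule.fg_span_singleton _
    have hbot := Submodule.eq_bot_of_le_smul_of_le_jacobson_bot (IsLocalRing.maximalIdeal R)
      ((IsLocalRing.maximalIdeal R) ^ j) hfg hle
      (by rw [IsLocalRing.jacobson_eq_maximalIdeal ⊥ bot_ne_top])
    exact hcontra (le_antisymm (hbot ▸ Ideal.pow_le_pow_right hj) bot_le)
  let p : LTSeries (Submodule R R) :=
    ⟨k + 1, fun i => (IsLocalRing.maximalIdeal R) ^ (k + 1 - (i : ℕ)), by
      intro i
      show (IsLocalRing.maximalIdeal R) ^ (k + 1 - ((Fin.castSucc i : Fin (k + 2)) : ℕ)) <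
        (IsLocalRing.maximalIdeal R) ^ (k + 1 - ((Fin.succ i : Fin (k + 2)) : ℕ))
      have hi : (i : ℕ) ≤ k := by omega
      have e1 : k + 1 - ((Fin.castSucc i : Fin (k + 2)) : ℕ) = (k - i) + 1 := by
        simp only [Fin.coe_castSucc]; omega
      have e2 : k + 1 - ((Fin.succ i : Fin (k + 2)) : ℕ) = k - i := by
        simp only [Fin.val_succ]; omega
      rw [e1, e2]
      exact hstrict (k - i) (by omega)⟩
  have hle := Order.LTSeries.length_le_krullDim p
  rw [krullDim_eq_cast hk] at hle
  have hpl : p.length = k + 1 := rfl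
  rw [hpl] at hle
  have h1 : ((k + 1 : ℕ) : ℕ∞) ≤ (k : ℕ∞) := by exact_mod_cast hle
  have h2 : (k + 1 : ℕ) ≤ k := by exact_mod_cast h1
  omega

private lemma exists_unit_pow {k : ℕ} {π : R}
    (hπ : IsLocalRing.maximalIdeal R = Ideal.span {π})
    (hnil : (IsLocalRing.maximalIdeal R) ^ k = ⊥)
    {a : R} (ha : a ≠ 0) : ∃ i < k, ∃ u : R, IsUnit u ∧ a = u * π ^ i := by
  classical
  have hex : ∃ j, a ∉ (IsLocalRing.maximalIdeal R) ^ j := ⟨k, by rw [hnil]; simpa using ha⟩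
  have hjspec : a ∉ (IsLocalRing.maximalIdeal R) ^ (Nat.find hex) := Nat.find_spec hex
  have hjk : Nat.find hex ≤ k := Nat.find_min' hex (by rw [hnil]; simpa using ha)
  have hj0 : Nat.find hex ≠ 0 := by
    intro h0
    rw [h0] at hjspec
    exact hjspec (by simp)
  have hmem0 : a ∈ (IsLocalRing.maximalIdeal R) ^ (Nat.find hex - 1) :=
    not_not.mp (Nat.find_min hex (by omega))
  obtain ⟨j, hjk, hj0, hjspec, hmem⟩ :
      ∃ j, j ≤ k ∧ j ≠ 0 ∧ a ∉ (IsLocalRing.maximalIdeal R) ^ j ∧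
        a ∈ (IsLocalRing.maximalIdeal R) ^ (j - 1) :=
    ⟨Nat.find hex, hjk, hj0, hjspec, hmem0⟩
  have hmem' : a ∈ Ideal.span {π ^ (j - 1)} := by
    rwa [hπ, Ideal.span_singleton_pow] at hmem
  obtain ⟨c, hc⟩ := Ideal.mem_span_singleton'.mp hmem'
  have hcu : IsUnit c := by
    by_contra hcu
    have hcm : c ∈ IsLocalRing.maximalIdeal R := (IsLocalRing.mem_maximalIdeal c).mpr hcu
    rw [hπ] at hcm
    obtain ⟨d, hd⟩ := Ideal.mem_span_singleton'.mp hcm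
    have hmem2 : a ∈ (IsLocalRing.maximalIdeal R) ^ (j - 1 + 1) := by
      rw [hπ, Ideal.span_singleton_pow]
      exact Ideal.mem_span_singleton'.mpr ⟨d, by rw [← hc, ← hd, pow_succ]; ring⟩
    have hij : j - 1 + 1 = j := by omega
    rw [hij] at hmem2
    exact hjspec hmem2
  exact ⟨j - 1, by omega, c, hcu, hc.symm⟩

private lemma ann_of_pow_smul {k : ℕ} {π : R}
    (hπ : IsLocalRing.maximalIdeal R = Ideal.span {π})
    (hnil : (IsLocalRing.maximalIdeal R) ^ k = ⊥)
    {V : Type*} [AddCommGroup V] [Module R V] {v : V}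
    (hv : π ^ (k - 1) • v ≠ 0) : ∀ a : R, a • v = 0 → a = 0 := by
  intro a hav
  by_contra ha
  obtain ⟨i, hik, u, hu, rfl⟩ := exists_unit_pow hπ hnil ha
  obtain ⟨w, rfl⟩ := hu
  have hπi : π ^ i • v = 0 := by
    calc π ^ i • v = (((w⁻¹ : Rˣ) : R) * ((w : R) * π ^ i)) • v := by
          rw [← mul_assoc, Units.inv_mul, one_mul]
      _ = ((w⁻¹ : Rˣ) : R) • (((w : R) * π ^ i) • v) := mul_smul _ _ _
      _ = 0 := by rw [hav, smul_zero]
  apply hv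
  have hsplit : π ^ (k - 1) = π ^ (k - 1 - i) * π ^ i := by
    rw [← pow_add]
    congr 1
    omega
  rw [hsplit, mul_smul, hπi, smul_zero]

private lemma dvd_total {k : ℕ} {π : R}
    (hπ : IsLocalRing.maximalIdeal R = Ideal.span {π})
    (hnil : (IsLocalRing.maximalIdeal R) ^ k = ⊥)
    (a b : R) : a ∣ b ∨ b ∣ a := by
  rcases eq_or_ne a 0 with rfl | ha
  · exact Or.inr (dvd_zero b)
  rcases eq_or_ne b 0 with rfl | hb
  · exact Or.inl (dvd_zero a)
  obtain ⟨i, hik, u, hu, rfl⟩ := exists_unit_pow hπ hnil ha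
  obtain ⟨w, rfl⟩ := hu
  obtain ⟨j, hjk, s, hs, rfl⟩ := exists_unit_pow hπ hnil hb
  obtain ⟨t, rfl⟩ := hs
  rcases le_total i j with hij | hij
  · refine Or.inl ⟨((w⁻¹ : Rˣ) : R) * (t : R) * π ^ (j - i), ?_⟩
    have hsplit : π ^ j = π ^ i * π ^ (j - i) := by
      rw [← pow_add]; congr 1; omega
    calc (t : R) * π ^ j
        = ((w : R) * ((w⁻¹ : Rˣ) : R)) * (t : R) * (π ^ i * π ^ (j - i)) := by
          rw [Units.mul_inv, one_mul, ← hsplit]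
      _ = (w : R) * π ^ i * (((w⁻¹ : Rˣ) : R) * (t : R) * π ^ (j - i)) := by ring
  · refine Or.inr ⟨((t⁻¹ : Rˣ) : R) * (w : R) * π ^ (i - j), ?_⟩
    have hsplit : π ^ i = π ^ j * π ^ (i - j) := by
      rw [← pow_add]; congr 1; omega
    calc (w : R) * π ^ i
        = ((t : R) * ((t⁻¹ : Rˣ) : R)) * (w : R) * (π ^ j * π ^ (i - j)) := by
          rw [Units.mul_inv, one_mul, ← hsplit]
      _ = (t : R) * π ^ j * (((t⁻¹ : Rˣ) : R) * (w : R) * π ^ (i - j)) := by ring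

end Ring
/-- Given bipartite Euler system data over `R` satisfying (DU), (LS) and (KER), for a
bipartite Euler system of odd type: if `λ_n ≠ 0` (`n ∈ N^even`) then `𝔪^{k-1} M_n = 0`,
and if `κ_n ≠ 0` (`n ∈ N^odd`) then `𝔪^{k-1} M_n = 0`. -/
theorem euler_system_annihilation
    {R : Type*} [CommRing R] [IsLocalRing R] [IsArtinianRing R]
    (hprin : (IsLocalRing.maximalIdeal R).IsPrincipal)
    (k : ℕ) (hk : moduleLength R R = (k : ℕ∞))
    {L : Type*} [Infinite L] [DecidableEq L]
    (even : Finset L → Prop)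
    (hflip : ∀ (n : Finset L) (ℓ : L), ℓ ∉ n → (even (insert ℓ n) ↔ ¬ even n))
    (Sel : Finset L → Type*) [∀ n, AddCommGroup (Sel n)] [∀ n, Module R (Sel n)]
    (M : Finset L → Type*) [∀ n, AddCommGroup (M n)] [∀ n, Module R (M n)]
    (m : Finset L → ℕ) (hm : ∀ n, moduleLength R (M n) = (m n : ℕ∞))
    (isoEven : ∀ n, even n → Nonempty (Sel n ≃ₗ[R] M n × M n))
    (isoOdd : ∀ n, ¬ even n → Nonempty (Sel n ≃ₗ[R] R × M n × M n))
    (Hunr Hord : L → Type*)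
    [∀ ℓ, AddCommGroup (Hunr ℓ)] [∀ ℓ, Module R (Hunr ℓ)]
    [∀ ℓ, AddCommGroup (Hord ℓ)] [∀ ℓ, Module R (Hord ℓ)]
    (bUnr : ∀ ℓ, Nonempty (Module.Basis (Fin 1) R (Hunr ℓ)))
    (bOrd : ∀ ℓ, Nonempty (Module.Basis (Fin 1) R (Hord ℓ)))
    (locUnr : ∀ (n : Finset L) (ℓ : L), ℓ ∉ n → (Sel n →ₗ[R] Hunr ℓ))
    (locOrd : ∀ (n : Finset L) (ℓ : L), ℓ ∉ n → (Sel (insert ℓ n) →ₗ[R] Hord ℓ))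
    -- (DU)
    (hDU : ∀ (n : Finset L) (ℓ : L) (h : ℓ ∉ n),
      moduleLength R (LinearMap.range (locUnr n ℓ h)) +
        moduleLength R (LinearMap.range (locOrd n ℓ h)) = (k : ℕ∞))
    -- (LS)
    (hLS : ∀ (n : Finset L) (C : Submodule R (Sel n)), C ≠ ⊥ →
      (∃ x : Sel n, C = Submodule.span R {x}) →
      ∃ (ℓ : L) (h : ℓ ∉ n), ∀ x ∈ C, locUnr n ℓ h x = 0 → x = 0)
    -- (KER)
    (hKER : ∀ (n : Finset L) (ℓ : L) (h : ℓ ∉ n),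
      ∃ g : LinearMap.ker (locUnr n ℓ h) →ₗ[R] Sel (insert ℓ n), Function.Injective g)
    -- a bipartite Euler system of odd type
    (κ : ∀ n : Finset L, ¬ even n → Sel n)
    (lam : ∀ n : Finset L, even n → R)
    (hrec1 : ∀ (n : Finset L) (hn : even n) (ℓ : L) (h : ℓ ∉ n)
        (ho : ¬ even (insert ℓ n)),
      Nonempty ((R ⧸ Ideal.span {lam n hn}) ≃ₗ[R]
        (Hord ℓ ⧸ Submodule.span R {locOrd n ℓ h (κ (insert ℓ n) ho)})))
    (hrec2 : ∀ (n : Finset L) (hn : ¬ even n) (ℓ : L) (h : ℓ ∉ n)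
        (he : even (insert ℓ n)),
      Nonempty ((R ⧸ Ideal.span {lam (insert ℓ n) he}) ≃ₗ[R]
        (Hunr ℓ ⧸ Submodule.span R {locUnr n ℓ h (κ n hn)}))) :
    (∀ (n : Finset L) (hn : even n), lam n hn ≠ 0 →
      (IsLocalRing.maximalIdeal R) ^ (k - 1) • (⊤ : Submodule R (M n)) = ⊥) ∧
    (∀ (n : Finset L) (hn : ¬ even n), κ n hn ≠ 0 →
      (IsLocalRing.maximalIdeal R) ^ (k - 1) • (⊤ : Submodule R (M n)) = ⊥) := by
  obtain ⟨π, hπ⟩ := hprin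
  have hπ : IsLocalRing.maximalIdeal R = Ideal.span {π} := hπ
  have hnil : (IsLocalRing.maximalIdeal R) ^ k = ⊥ := max_pow_eq_bot k hk hπ
  -- key lemma: if an even-level Selmer group contains an element with trivial annihilator,
  -- then the corresponding lambda vanishes
  have evenKey : ∀ (p : Finset L) (hp : even p),
      (∃ x : Sel p, ∀ a : R, a • x = 0 → a = 0) → lam p hp = 0 := by
    rintro p hp ⟨x, hx⟩
    have hx0 : x ≠ 0 := fun h => one_ne_zero (hx 1 (by rw [h, smul_zero]))
    obtain ⟨ℓ, h, hinj⟩ := hLS p (Submodule.span R {x})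
      (fun hb => hx0 (Submodule.span_singleton_eq_bot.mp hb)) ⟨x, rfl⟩
    have hfx : ∀ a : R, a • locUnr p ℓ h x = 0 → a = 0 := by
      intro a ha
      have h1 : locUnr p ℓ h (a • x) = 0 := by rw [map_smul]; exact ha
      exact hx a (hinj (a • x)
        (Submodule.smul_mem _ a (Submodule.mem_span_singleton_self x)) h1)
    -- the unramified localization has full image
    have h1 : (k : ℕ∞) ≤ moduleLength R (LinearMap.range (locUnr p ℓ h)) := by
      rw [← hk]
      refine mlen_ge_of_free_elt (⟨locUnr p ℓ h x, LinearMap.mem_range_self _ x⟩ :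
        LinearMap.range (locUnr p ℓ h)) ?_
      intro a ha
      exact hfx a (by simpa using congrArg Subtype.val ha)
    -- hence the ordinary localization at the next level vanishes
    have h2 : moduleLength R (LinearMap.range (locOrd p ℓ h)) = 0 := by
      have hAB := hDU p ℓ h
      have hA : moduleLength R (LinearMap.range (locUnr p ℓ h)) = (k : ℕ∞) :=
        le_antisymm (le_trans le_self_add (le_of_eq hAB)) h1
      rw [hA] at hAB
      have := WithTop.add_left_cancel (α := ℕ)
        (by exact_mod_cast WithTop.coe_ne_top : (k : ℕ∞) ≠ ⊤)
        (hAB.trans (add_zero (k : ℕ∞)).symm)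
      exact this
    have hord0 : ∀ y, locOrd p ℓ h y = 0 := by
      intro y
      have hy := eq_zero_of_mlen_zero h2
        (⟨locOrd p ℓ h y, LinearMap.mem_range_self _ y⟩ : LinearMap.range (locOrd p ℓ h))
      simpa using congrArg Subtype.val hy
    have ho : ¬ even (insert ℓ p) := fun he' => (hflip p ℓ h).mp he' hp
    obtain ⟨e⟩ := hrec1 p hp ℓ h ho
    rw [hord0 (κ (insert ℓ p) ho)] at e
    obtain ⟨bo⟩ := bOrd ℓ
    have eH : Hord ℓ ≃ₗ[R] R := bo.equivFun ≪≫ₗ LinearEquiv.funUnique (Fin 1) R R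
    have e2 : R ≃ₗ[R] (R ⧸ (Ideal.span {lam p hp} : Submodule R R)) :=
      eH.symm ≪≫ₗ (Submodule.quotEquivOfEqBot _ (Submodule.span_zero_singleton R)).symm
        ≪≫ₗ e.symm
    have hbot := ideal_eq_bot_of_equiv _ e2
    exact Submodule.span_singleton_eq_bot.mp hbot
  constructor
  · -- even part
    intro n hn hlam
    by_contra hne
    have hex : ∃ mm : M n, π ^ (k - 1) • mm ≠ 0 := by
      by_contra hall
      push_neg at hall
      apply hne
      rw [hπ, Ideal.span_singleton_pow]
      refine eq_bot_iff.mpr (Submodule.smul_le.mpr fun r hr mm _ => ?_)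
      obtain ⟨c, hc⟩ := Ideal.mem_span_singleton'.mp hr
      rw [← hc, mul_smul, hall mm, smul_zero]
      exact Submodule.zero_mem ⊥
    obtain ⟨mm, hmm⟩ := hex
    have hann := ann_of_pow_smul hπ hnil hmm
    obtain ⟨eS⟩ := isoEven n hn
    apply hlam
    apply evenKey n hn
    refine ⟨eS.symm (mm, 0), fun a ha => ?_⟩
    have h1 : eS (a • eS.symm (mm, 0)) = 0 := by rw [ha, map_zero]
    rw [map_smul, LinearEquiv.apply_symm_apply] at h1
    have h2 : a • mm = 0 := congrArg Prod.fst h1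
    exact hann a h2
  · -- odd part
    intro n hn hκ
    by_contra hne
    have hex : ∃ mm : M n, π ^ (k - 1) • mm ≠ 0 := by
      by_contra hall
      push_neg at hall
      apply hne
      rw [hπ, Ideal.span_singleton_pow]
      refine eq_bot_iff.mpr (Submodule.smul_le.mpr fun r hr mm _ => ?_)
      obtain ⟨c, hc⟩ := Ideal.mem_span_singleton'.mp hr
      rw [← hc, mul_smul, hall mm, smul_zero]
      exact Submodule.zero_mem ⊥
    obtain ⟨mm, hmm⟩ := hex
    have hann := ann_of_pow_smul hπ hnil hmm
    obtain ⟨eS⟩ := isoOdd n hn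
    set x : Sel n := eS.symm (1, 0, 0) with hxdef
    set y : Sel n := eS.symm (0, mm, 0) with hydef
    have hfree2 : ∀ a b : R, a • x + b • y = 0 → a = 0 ∧ b = 0 := by
      intro a b hab
      have h1 : eS (a • x + b • y) = 0 := by rw [hab, map_zero]
      rw [map_add, map_smul, map_smul, hxdef, hydef, LinearEquiv.apply_symm_apply,
        LinearEquiv.apply_symm_apply] at h1
      have ha : a = 0 := by
        have := congrArg Prod.fst h1
        simpa using this
      refine ⟨ha, ?_⟩
      have hb : b • mm = 0 := by
        have := congrArg (fun z => z.2.1) h1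
        simpa using this
      exact hann b hb
    obtain ⟨ℓ, h, hinj⟩ := hLS n (Submodule.span R {κ n hn})
      (fun hb => hκ (Submodule.span_singleton_eq_bot.mp hb)) ⟨κ n hn, rfl⟩
    obtain ⟨bu⟩ := bUnr ℓ
    have hrepr : ∀ w : Hunr ℓ, w = bu.repr w 0 • bu 0 := by
      intro w
      conv_lhs => rw [← bu.sum_repr w]
      rw [Fin.sum_univ_one]
    -- produce an element of the kernel with trivial annihilator
    obtain ⟨z, hz, hzann⟩ : ∃ z : Sel n, locUnr n ℓ h z = 0 ∧ ∀ a : R, a • z = 0 → a = 0 := by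
      rcases dvd_total hπ hnil (bu.repr (locUnr n ℓ h x) 0) (bu.repr (locUnr n ℓ h y) 0)
        with ⟨c, hc⟩ | ⟨c, hc⟩
      · refine ⟨y - c • x, ?_, ?_⟩
        · rw [map_sub, map_smul, hrepr (locUnr n ℓ h y), hrepr (locUnr n ℓ h x), hc,
            smul_smul, mul_comm, sub_self]
        · intro a ha
          have h1 : (-(a * c)) • x + a • y = 0 := by
            rw [← ha]
            rw [smul_sub, smul_smul, neg_smul]
            abel
          exact (hfree2 _ _ h1).2
      · refine ⟨x - c • y, ?_, ?_⟩
        · rw [map_sub, map_smul, hrepr (locUnr n ℓ h x), hrepr (locUnr n ℓ h y), hc,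
            smul_smul, mul_comm, sub_self]
        · intro a ha
          have h1 : a • x + (-(a * c)) • y = 0 := by
            rw [← ha]
            rw [smul_sub, smul_smul, neg_smul]
            abel
          exact (hfree2 _ _ h1).1
    obtain ⟨g, hg⟩ := hKER n ℓ h
    have hzker : z ∈ LinearMap.ker (locUnr n ℓ h) := LinearMap.mem_ker.mpr hz
    have he : even (insert ℓ n) := (hflip n ℓ h).mpr hn
    have hlam0 : lam (insert ℓ n) he = 0 := by
      apply evenKey (insert ℓ n) he
      refine ⟨g ⟨z, hzker⟩, fun a ha => ?_⟩
      have h1 : g (a • (⟨z, hzker⟩ : LinearMap.ker (locUnr n ℓ h))) = g 0 := by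
        rw [map_smul, ha, map_zero]
      have h2 := hg h1
      have h3 : a • z = 0 := by simpa using congrArg Subtype.val h2
      exact hzann a h3
    obtain ⟨e⟩ := hrec2 n hn ℓ h he
    rw [hlam0] at e
    have eHu : Hunr ℓ ≃ₗ[R] R := bu.equivFun ≪≫ₗ LinearEquiv.funUnique (Fin 1) R R
    have e2 : R ≃ₗ[R] (Hunr ℓ ⧸ Submodule.span R {locUnr n ℓ h (κ n hn)}) :=
      (Submodule.quotEquivOfEqBot (Ideal.span {(0 : R)} : Submodule R R)
        (by simpa using Submodule.span_zero_singleton R)).symm ≪≫ₗ e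
    have hw0 := elt_zero_of_equiv_quot eHu _ e2
    exact hκ (hinj _ (Submodule.mem_span_singleton_self _) hw0)
end

section
/- Given bipartite Euler system data over R satisfying hypotheses (DU) and (LI), for every n ∈ N^odd and ℓ ∈ L∖n the cyclic R-modules loc^unr_ℓ(Stub_n) and Stub_{n∪{ℓ}} are isomorphic, and for every n ∈ N^even and ℓ ∈ L∖n the cyclic R-modules loc^ord_ℓ(Stub_{n∪{ℓ}}) and Stub_n are isomorphic. -/
namespace StubShiftAux

open Order IsLocalRing

/-- Krull dimension of a poset covered by a strictly monotone chain indexed by `Fin (d+1)`. -/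
lemma krullDim_eq_of_fin_chain {α : Type*} [PartialOrder α] (d : ℕ)
    (f : Fin (d + 1) → α) (hmono : StrictMono f) (hsurj : Function.Surjective f) :
    Order.krullDim α = (d : ℕ) := by
  have hne : Nonempty α := ⟨f 0⟩
  apply le_antisymm
  · rw [Order.krullDim_eq_iSup_length]
    have hb : (⨆ p : LTSeries α, (p.length : ℕ∞)) ≤ (d : ℕ∞) := by
      refine iSup_le fun p => ?_
      suffices h : p.length ≤ d by exact_mod_cast h
      have hinj : Function.Injective (fun i => (hsurj (p.toFun i)).choose) := by
        intro i j hij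
        apply p.strictMono.injective
        rw [← (hsurj (p.toFun i)).choose_spec, ← (hsurj (p.toFun j)).choose_spec]
        simp only at hij
        rw [hij]
      have hcard := Fintype.card_le_of_injective _ hinj
      simp only [Fintype.card_fin] at hcard
      omega
    exact_mod_cast hb
  · exact LTSeries.length_le_krullDim ⟨d, f, fun i => hmono (Fin.castSucc_lt_succ (i := i))⟩

variable {R : Type*} [CommRing R] [IsLocalRing R] [IsArtinianRing R]

lemma exists_pow_eq_bot : ∃ n : ℕ, (maximalIdeal R) ^ n = ⊥ := by
  obtain ⟨n, hn⟩ := IsArtinianRing.isNilpotent_jacobson_bot (R := R)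
  exact ⟨n, by rwa [IsLocalRing.jacobson_eq_maximalIdeal ⊥ bot_ne_top] at hn⟩

lemma pow_step (K : ℕ) (hK : (maximalIdeal R) ^ K = ⊥) (hKmin : ∀ j, (maximalIdeal R) ^ j = ⊥ → K ≤ j)
    (a : ℕ) (ha : a < K) :
    (maximalIdeal R) ^ (a + 1) < (maximalIdeal R) ^ a := by
  refine lt_of_le_of_ne (Ideal.pow_le_pow_right (Nat.le_succ a)) ?_
  intro h
  have hstep : ∀ t, (maximalIdeal R) ^ (a + t) = (maximalIdeal R) ^ a := by
    intro t
    induction t with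
    | zero => rfl
    | succ t ih =>
      have : a + (t + 1) = (a + t) + 1 := by omega
      rw [this, pow_succ, ih, ← pow_succ, h]
  have hbot : (maximalIdeal R) ^ a = ⊥ := by
    rw [← hstep (K - a), show a + (K - a) = K by omega, hK]
  exact absurd (hKmin a hbot) (by omega)

lemma classify (K : ℕ) (hK : (maximalIdeal R) ^ K = ⊥) (hprin : (maximalIdeal R).IsPrincipal) (J : Ideal R) :
    ∃ c, c ≤ K ∧ J = (maximalIdeal R) ^ c := by
  classical
  obtain ⟨π, hπ⟩ := hprin
  have hpow : ∀ i : ℕ, (maximalIdeal R) ^ i = Ideal.span {π ^ i} := by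
    intro i
    rw [hπ, Ideal.submodule_span_eq, Ideal.span_singleton_pow]
  by_cases hbot : J = ⊥
  · exact ⟨K, le_rfl, by rw [hbot, hK]⟩
  · have h0 : J ≤ (maximalIdeal R) ^ 0 := by simp
    set P := fun i => J ≤ (maximalIdeal R) ^ i with hP
    have hPK : ¬ P K := fun h => hbot (le_bot_iff.mp (hK ▸ h))
    set c := Nat.findGreatest P K with hc_def
    have hc : P c := Nat.findGreatest_spec (Nat.zero_le K) h0
    have hcK : c ≤ K := Nat.findGreatest_le K
    have hclt : c < K := lt_of_le_of_ne hcK (fun h => hPK (h ▸ hc))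
    have hnc : ¬ P (c + 1) := Nat.findGreatest_is_greatest (Nat.lt_succ_self c) (by omega)
    obtain ⟨x, hxJ, hxnot⟩ : ∃ x ∈ J, x ∉ (maximalIdeal R) ^ (c + 1) := by
      by_contra hcon
      push_neg at hcon
      exact hnc (fun x hx => hcon x hx)
    have hx : x ∈ Ideal.span {π ^ c} := (hpow c) ▸ hc hxJ
    obtain ⟨t, ht⟩ := Ideal.mem_span_singleton'.mp hx
    have htu : IsUnit t := by
      by_contra hu
      have htm : t ∈ maximalIdeal R := by
        rwa [← IsLocalRing.notMem_maximalIdeal, not_not] at hu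
      apply hxnot
      have : x ∈ (maximalIdeal R) * (maximalIdeal R) ^ c := by
        rw [← ht]
        exact Ideal.mul_mem_mul htm (by
          rw [hpow c]; exact Ideal.subset_span (by simp))
      rwa [← pow_succ'] at this
    obtain ⟨u, hu⟩ := htu
    have hπc : π ^ c ∈ J := by
      have hval : (↑u⁻¹ : R) * x = π ^ c := by
        rw [← ht, ← hu, ← mul_assoc, Units.inv_mul, one_mul]
      exact hval ▸ Ideal.mul_mem_left J _ hxJ
    refine ⟨c, hcK, le_antisymm hc ?_⟩
    rw [hpow c]
    exact Ideal.span_le.mpr (by simpa using hπc)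

lemma moduleLength_congr {M N : Type*} [AddCommGroup M] [Module R M]
    [AddCommGroup N] [Module R N] (e : M ≃ₗ[R] N) :
    moduleLength R M = moduleLength R N :=
  congrArg (fun x => WithBot.unbotD 0 x)
    (Order.krullDim_eq_of_orderIso (Submodule.orderIsoMapComap e))

lemma length_top (K : ℕ) (hK : (maximalIdeal R) ^ K = ⊥) (hprin : (maximalIdeal R).IsPrincipal)
    (hKmin : ∀ j, (maximalIdeal R) ^ j = ⊥ → K ≤ j) :
    moduleLength R R = (K : ℕ∞) := by
  have hmono : StrictMono (fun i : Fin (K + 1) => (maximalIdeal R) ^ (K - (i : ℕ))) := by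
    rw [Fin.strictMono_iff_lt_succ]
    intro i
    have hi : (i : ℕ) < K := i.isLt
    simp only [Fin.coe_castSucc, Fin.val_succ]
    have h1 : K - ((i : ℕ) + 1) + 1 = K - (i : ℕ) := by omega
    have := pow_step K hK hKmin (K - ((i : ℕ) + 1)) (by omega)
    rwa [h1] at this
  have hsurj : Function.Surjective (fun i : Fin (K + 1) => (maximalIdeal R) ^ (K - (i : ℕ))) := by
    intro J
    obtain ⟨c, hcK, hJ⟩ := classify K hK hprin J
    exact ⟨⟨K - c, by omega⟩, by simp only; rw [show K - (K - c) = c by omega]; exact hJ.symm⟩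
  have hdim := krullDim_eq_of_fin_chain K _ hmono hsurj
  show WithBot.unbotD 0 (Order.krullDim (Ideal R)) = (K : ℕ∞)
  rw [hdim]
  rfl

lemma length_pow (K : ℕ) (hK : (maximalIdeal R) ^ K = ⊥) (hprin : (maximalIdeal R).IsPrincipal)
    (hKmin : ∀ j, (maximalIdeal R) ^ j = ⊥ → K ≤ j)
    (c : ℕ) (hc : c ≤ K) :
    moduleLength R ((maximalIdeal R) ^ c : Ideal R) = ((K - c : ℕ) : ℕ∞) := by
  have hiso := Submodule.MapSubtype.orderIso ((maximalIdeal R) ^ c : Ideal R)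
  set f : Fin (K - c + 1) → { p' : Submodule R R // p' ≤ (maximalIdeal R) ^ c } :=
    fun i => ⟨(maximalIdeal R) ^ (K - (i : ℕ)),
      Ideal.pow_le_pow_right (by omega : c ≤ K - (i : ℕ))⟩ with hf
  have hmono : StrictMono f := by
    rw [Fin.strictMono_iff_lt_succ]
    intro i
    have hi : (i : ℕ) < K - c := i.isLt
    simp only [hf, Fin.coe_castSucc, Fin.val_succ, Subtype.mk_lt_mk]
    have h1 : K - ((i : ℕ) + 1) + 1 = K - (i : ℕ) := by omega
    have := pow_step K hK hKmin (K - ((i : ℕ) + 1)) (by omega)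
    rwa [h1] at this
  have hsurj : Function.Surjective f := by
    rintro ⟨J, hJ⟩
    obtain ⟨e, heK, hJe⟩ := classify K hK hprin J
    by_cases hec : c ≤ e
    · refine ⟨⟨K - e, by omega⟩, ?_⟩
      simp only [hf]
      congr 1
      rw [show K - (K - e) = e by omega]
      exact hJe.symm
    · push_neg at hec
      have hJc : J = (maximalIdeal R) ^ c := by
        refine le_antisymm hJ ?_
        rw [hJe]
        exact Ideal.pow_le_pow_right (le_of_lt hec)
      refine ⟨⟨K - c, by omega⟩, ?_⟩
      simp only [hf]
      congr 1
      rw [show K - (K - c) = c by omega]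
      exact hJc.symm
  have hdim := krullDim_eq_of_fin_chain (K - c) f hmono hsurj
  have hord := Order.krullDim_eq_of_orderIso hiso
  unfold moduleLength
  rw [hord, hdim]
  rfl

lemma key (hprin : (maximalIdeal R).IsPrincipal)
    (k : ℕ) (hk : moduleLength R R = (k : ℕ∞))
    {A B : Type*} [AddCommGroup A] [Module R A] [AddCommGroup B] [Module R B]
    (f : A →ₗ[R] B) (bB : Module.Basis (Fin 1) R B) (p q : ℕ)
    (hrel : (q : ℕ∞) + moduleLength R (LinearMap.range f) = (p : ℕ∞) + (k : ℕ∞)) :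
    Nonempty ((Submodule.map f ((maximalIdeal R) ^ p • (⊤ : Submodule R A))) ≃ₗ[R]
      ↥((maximalIdeal R) ^ q : Ideal R)) := by
  classical
  set K := Nat.find (exists_pow_eq_bot (R := R)) with hKdef
  have hK : (maximalIdeal R) ^ K = ⊥ := Nat.find_spec (exists_pow_eq_bot (R := R))
  have hKmin : ∀ j, (maximalIdeal R) ^ j = ⊥ → K ≤ j := fun j hj => Nat.find_le hj
  have hKk : K = k := by
    have := length_top K hK hprin hKmin
    rw [hk] at this
    exact_mod_cast this.symm
  -- transport to R via the basis
  set e : B ≃ₗ[R] R := bB.equivFun.trans (LinearEquiv.funUnique (Fin 1) R R) with he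
  set J : Ideal R := Submodule.map (e : B →ₗ[R] R) (LinearMap.range f) with hJ
  have hlenJ : moduleLength R (LinearMap.range f) = moduleLength R J :=
    moduleLength_congr (e.submoduleMap (LinearMap.range f))
  obtain ⟨c, hcK, hJc⟩ := classify K hK hprin J
  have hlen : moduleLength R J = ((K - c : ℕ) : ℕ∞) := by
    rw [hJc]; exact length_pow K hK hprin hKmin c hcK
  -- numerical identity : q = p + c
  have hq : q = p + c := by
    rw [hlenJ, hlen, hKk] at hrel
    have : q + (k - c) = p + k := by exact_mod_cast hrel
    omega
  -- the submodule equality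
  have hmap : Submodule.map f ((maximalIdeal R) ^ p • (⊤ : Submodule R A)) =
      (maximalIdeal R) ^ p • LinearMap.range f := by
    rw [Submodule.map_smul'', Submodule.map_top]
  have hmap2 : Submodule.map (e : B →ₗ[R] R) ((maximalIdeal R) ^ p • LinearMap.range f) =
      ((maximalIdeal R) ^ q : Ideal R) := by
    rw [Submodule.map_smul'', ← hJ, hJc, Ideal.smul_eq_mul, ← pow_add, ← hq]
  exact ⟨(LinearEquiv.ofEq _ _ hmap).trans
    ((e.submoduleMap ((maximalIdeal R) ^ p • LinearMap.range f)).trans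
      (LinearEquiv.ofEq _ _ hmap2))⟩

end StubShiftAux

/-- Given bipartite Euler system data over `R` satisfying (DU) and (LI):
for odd `n` and `ℓ ∉ n`, `loc^unr_ℓ(Stub_n) ≅ Stub_{n∪{ℓ}}`, and for even `n` and
`ℓ ∉ n`, `loc^ord_ℓ(Stub_{n∪{ℓ}}) ≅ Stub_n`. -/
theorem stub_shift
    {R : Type*} [CommRing R] [IsLocalRing R] [IsArtinianRing R]
    (hprin : (IsLocalRing.maximalIdeal R).IsPrincipal)
    (k : ℕ) (hk : moduleLength R R = (k : ℕ∞))
    {L : Type*} [Infinite L] [DecidableEq L]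
    (even : Finset L → Prop)
    (hflip : ∀ (n : Finset L) (ℓ : L), ℓ ∉ n → (even (insert ℓ n) ↔ ¬ even n))
    (Sel : Finset L → Type*) [∀ n, AddCommGroup (Sel n)] [∀ n, Module R (Sel n)]
    (M : Finset L → Type*) [∀ n, AddCommGroup (M n)] [∀ n, Module R (M n)]
    (m : Finset L → ℕ) (hm : ∀ n, moduleLength R (M n) = (m n : ℕ∞))
    (isoEven : ∀ n, even n → Nonempty (Sel n ≃ₗ[R] M n × M n))
    (isoOdd : ∀ n, ¬ even n → Nonempty (Sel n ≃ₗ[R] R × M n × M n))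
    (Hunr Hord : L → Type*)
    [∀ ℓ, AddCommGroup (Hunr ℓ)] [∀ ℓ, Module R (Hunr ℓ)]
    [∀ ℓ, AddCommGroup (Hord ℓ)] [∀ ℓ, Module R (Hord ℓ)]
    (bUnr : ∀ ℓ, Nonempty (Module.Basis (Fin 1) R (Hunr ℓ)))
    (bOrd : ∀ ℓ, Nonempty (Module.Basis (Fin 1) R (Hord ℓ)))
    (locUnr : ∀ (n : Finset L) (ℓ : L), ℓ ∉ n → (Sel n →ₗ[R] Hunr ℓ))
    (locOrd : ∀ (n : Finset L) (ℓ : L), ℓ ∉ n → (Sel (insert ℓ n) →ₗ[R] Hord ℓ))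
    -- (DU)
    (hDU : ∀ (n : Finset L) (ℓ : L) (h : ℓ ∉ n),
      moduleLength R (LinearMap.range (locUnr n ℓ h)) +
        moduleLength R (LinearMap.range (locOrd n ℓ h)) = (k : ℕ∞))
    -- (LI)
    (hLI : ∀ (n : Finset L) (ℓ : L) (h : ℓ ∉ n),
      (even n → (m n : ℕ∞) =
        (m (insert ℓ n) : ℕ∞) + moduleLength R (LinearMap.range (locUnr n ℓ h))) ∧
      (¬ even n → (m (insert ℓ n) : ℕ∞) =
        (m n : ℕ∞) + moduleLength R (LinearMap.range (locOrd n ℓ h)))) :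
    (∀ (n : Finset L), ¬ even n → ∀ (ℓ : L) (h : ℓ ∉ n),
      Nonempty
        ((Submodule.map (locUnr n ℓ h)
            ((IsLocalRing.maximalIdeal R) ^ (m n) • (⊤ : Submodule R (Sel n)))) ≃ₗ[R]
          ↥((IsLocalRing.maximalIdeal R) ^ (m (insert ℓ n)) : Ideal R))) ∧
    (∀ (n : Finset L), even n → ∀ (ℓ : L) (h : ℓ ∉ n),
      Nonempty
        ((Submodule.map (locOrd n ℓ h)
            ((IsLocalRing.maximalIdeal R) ^ (m (insert ℓ n)) •
              (⊤ : Submodule R (Sel (insert ℓ n))))) ≃ₗ[R]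
          ↥((IsLocalRing.maximalIdeal R) ^ (m n) : Ideal R))) := by
  constructor
  · intro n hodd ℓ h
    refine StubShiftAux.key hprin k hk (locUnr n ℓ h) (bUnr ℓ).some (m n) (m (insert ℓ n)) ?_
    have h1 := (hLI n ℓ h).2 hodd
    calc (m (insert ℓ n) : ℕ∞) + moduleLength R (LinearMap.range (locUnr n ℓ h))
        = ((m n : ℕ∞) + moduleLength R (LinearMap.range (locOrd n ℓ h))) +
            moduleLength R (LinearMap.range (locUnr n ℓ h)) := by rw [← h1]
      _ = (m n : ℕ∞) + (moduleLength R (LinearMap.range (locUnr n ℓ h)) +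
            moduleLength R (LinearMap.range (locOrd n ℓ h))) := by
          rw [add_assoc, add_comm (moduleLength R (LinearMap.range (locOrd n ℓ h)))]
      _ = (m n : ℕ∞) + (k : ℕ∞) := by rw [hDU n ℓ h]
  · intro n heven ℓ h
    refine StubShiftAux.key hprin k hk (locOrd n ℓ h) (bOrd ℓ).some (m (insert ℓ n)) (m n) ?_
    have h1 := (hLI n ℓ h).1 heven
    calc (m n : ℕ∞) + moduleLength R (LinearMap.range (locOrd n ℓ h))
        = ((m (insert ℓ n) : ℕ∞) + moduleLength R (LinearMap.range (locUnr n ℓ h))) +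
            moduleLength R (LinearMap.range (locOrd n ℓ h)) := by rw [← h1]
      _ = (m (insert ℓ n) : ℕ∞) + (k : ℕ∞) := by rw [add_assoc, hDU n ℓ h]
end
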